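/- Let Λ be an invertible (n+1)×(n+1) matrix over a domain, representing an injective map with cokernel a module M that embeds into a domain S via elements g₁,…,g_{n+1} ∈ S (the images of the standard basis). Then Cramer's rule yields M_{i,j}·g_k = ± M_{k,j}·g_i in S for all i, j, k, where M_{i,j} denotes the submaximal minor of Λ obtained by deleting the i-th row and j-th column. -/

import Mathlib

open Matrix in
private lemma aux_submatrix_rank_le {N : ℕ} {F : Type*} [Field F]
    (A : Matrix (Fin (N + 1)) (Fin (N + 1)) F) (f g : Fin N → Fin (N + 1)) :
    (A.submatrix f g).rank ≤ A.rank := by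
  classical
  have h : A.submatrix f g =
      ((1 : Matrix (Fin (N + 1)) (Fin (N + 1)) F).submatrix f id) *
        (A * ((1 : Matrix (Fin (N + 1)) (Fin (N + 1)) F).submatrix id g)) := by
    ext a b
    simp [Matrix.mul_apply, Matrix.one_apply, ite_mul, mul_ite,
      Finset.sum_ite_eq, Finset.sum_ite_eq']
  rw [h]
  exact le_trans (Matrix.rank_mul_le_right _ _) (Matrix.rank_mul_le_left _ _)

open Matrix in
private lemma aux_kernel_prop {N : ℕ} {F : Type*} [Field F]
    (A : Matrix (Fin (N + 1)) (Fin (N + 1)) F) (hA : A.det = 0)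
    (G : Fin (N + 1) → F) (hG : G ᵥ* A = 0)
    (i j : Fin (N + 1)) (hne : (A.submatrix i.succAbove j.succAbove).det ≠ 0)
    (k : Fin (N + 1)) :
    G k * A.adjugate j i = G i * A.adjugate j k := by
  classical
  set w : Fin (N + 1) → F := fun m => A.adjugate j m with hw_def
  have hw : w ᵥ* A = 0 := by
    ext l
    have h := congrFun (congrFun (Matrix.adjugate_mul A) j) l
    simp only [Matrix.mul_apply, hA, Matrix.smul_apply, zero_smul] at h
    simpa [Matrix.vecMul, dotProduct, w] using h
  have hrank_ge : N ≤ A.rank := by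
    have h1 : (A.submatrix i.succAbove j.succAbove).rank = N := by
      rw [Matrix.rank_of_isUnit _ ((Matrix.isUnit_iff_isUnit_det _).mpr
        (isUnit_iff_ne_zero.mpr hne))]
      simp
    have h2 := aux_submatrix_rank_le A i.succAbove j.succAbove
    omega
  have hrank_le : A.rank ≤ N := by
    obtain ⟨v, hv0, hv⟩ := (Matrix.exists_mulVec_eq_zero_iff).mpr hA
    have hvk : v ∈ LinearMap.ker A.mulVecLin := by
      simpa [Matrix.mulVecLin] using hv
    have hker : 0 < Module.finrank F (LinearMap.ker A.mulVecLin) := by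
      have : Nontrivial (LinearMap.ker A.mulVecLin) :=
        ⟨⟨v, hvk⟩, 0, by simpa using hv0⟩
      exact Module.finrank_pos
    have h2 := LinearMap.finrank_range_add_finrank_ker A.mulVecLin
    have h3 : Module.finrank F (Fin (N + 1) → F) = N + 1 := Module.finrank_fin_fun F
    rw [h3] at h2
    have : A.rank = Module.finrank F (LinearMap.range A.mulVecLin) := rfl
    omega
  have hrank : A.rank = N := le_antisymm hrank_le hrank_ge
  have hGK : G ∈ LinearMap.ker (Aᵀ).mulVecLin := by
    simp only [LinearMap.mem_ker, Matrix.mulVecLin_apply, Matrix.mulVec_transpose]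
    exact hG
  have hwK : w ∈ LinearMap.ker (Aᵀ).mulVecLin := by
    simp only [LinearMap.mem_ker, Matrix.mulVecLin_apply, Matrix.mulVec_transpose]
    exact hw
  have hwne : w i ≠ 0 := by
    rw [hw_def]
    simp only [Matrix.adjugate_fin_succ_eq_det_submatrix]
    exact mul_ne_zero (pow_ne_zero _ (by norm_num)) hne
  have hK1 : Module.finrank F (LinearMap.ker (Aᵀ).mulVecLin) = 1 := by
    have h2 := LinearMap.finrank_range_add_finrank_ker (Aᵀ).mulVecLin
    have h3 : Aᵀ.rank = N := by rw [Matrix.rank_transpose]; exact hrank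
    have h4 : Aᵀ.rank = Module.finrank F (LinearMap.range (Aᵀ).mulVecLin) := rfl
    have h5 : Module.finrank F (Fin (N + 1) → F) = N + 1 := Module.finrank_fin_fun F
    rw [h5] at h2
    omega
  have hwne0 : w ≠ 0 := fun h => hwne (by rw [h]; rfl)
  have hspan : (F ∙ w) = LinearMap.ker (Aᵀ).mulVecLin := by
    apply Submodule.eq_of_le_of_finrank_le
    · rw [Submodule.span_singleton_le_iff_mem]; exact hwK
    · rw [hK1, finrank_span_singleton hwne0]
  obtain ⟨c, hc⟩ := Submodule.mem_span_singleton.mp (hspan ▸ hGK)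
  have hk := congrFun hc k
  have hi := congrFun hc i
  simp only [Pi.smul_apply, smul_eq_mul] at hk hi
  rw [← hk, ← hi]
  ring

/-- Cramer's rule relation for the cokernel of an injective square matrix.  Let `Λ` be an
`(n+1) × (n+1)` matrix over a domain `R` with `det Λ ≠ 0`, and suppose the cokernel of `Λ`
embeds into a domain `S` (an `R`-algebra) via the images `g₁,…,g_{n+1}` of the standard basis:
the `gᵢ` satisfy the relations given by the columns of `Λ`, and any `R`-linear relation among
the `gᵢ` comes from a column combination of `Λ`.  Then `M_{i,j}·g_k = (−1)^{i+k}·M_{k,j}·g_i`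
in `S` for all `i, j, k`, where `M_{i,j}` is the submaximal minor of `Λ` deleting row `i` and
column `j`. -/
theorem stmt_14 {n : ℕ} {R S : Type*} [CommRing R] [IsDomain R]
    [CommRing S] [IsDomain S] [Algebra R S]
    (Λ : Matrix (Fin (n + 1)) (Fin (n + 1)) R) (hdet : Λ.det ≠ 0)
    (g : Fin (n + 1) → S)
    (hrel : ∀ i, ∑ j, algebraMap R S (Λ j i) * g j = 0)
    (hinj : ∀ c : Fin (n + 1) → R,
      ∑ i, algebraMap R S (c i) * g i = 0 → ∃ y, c = Λ.mulVec y) :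
    ∀ i k j : Fin (n + 1),
      algebraMap R S (Λ.submatrix i.succAbove j.succAbove).det * g k =
        (-1 : S) ^ ((i : ℕ) + (k : ℕ)) *
          algebraMap R S (Λ.submatrix k.succAbove j.succAbove).det * g i := by
  classical
  intro i k j
  set φ : R →+* S := (algebraMap R S : R →+* S) with hφ
  let F := FractionRing S
  set ι : S →+* F := (algebraMap S F : S →+* F) with hι_def
  have hι : Function.Injective ι := IsFractionRing.injective S F
  set f : R →+* F := ι.comp φ with hf
  set A : Matrix (Fin (n + 1)) (Fin (n + 1)) F := Λ.map f with hA_def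
  have hdetsub : ∀ a b : Fin (n + 1),
      (A.submatrix a.succAbove b.succAbove).det =
        ι (φ (Λ.submatrix a.succAbove b.succAbove).det) := by
    intro a b
    calc (A.submatrix a.succAbove b.succAbove).det
        = (f.mapMatrix (Λ.submatrix a.succAbove b.succAbove)).det := rfl
      _ = f (Λ.submatrix a.succAbove b.succAbove).det :=
          (RingHom.map_det f (Λ.submatrix a.succAbove b.succAbove)).symm
      _ = ι (φ (Λ.submatrix a.succAbove b.succAbove).det) := rfl
  set G := fun m => ι (g m) with hG_def
  have hG : Matrix.vecMul G A = 0 := by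
    ext l
    have := congrArg ι (hrel l)
    simpa [Matrix.vecMul, dotProduct, G, A, f, map_sum, mul_comm] using this
  apply hι
  simp only [map_mul, map_pow, map_neg, map_one]
  rw [← hdetsub i j, ← hdetsub k j]
  have hGk : ι (g k) = G k := rfl
  have hGi : ι (g i) = G i := rfl
  rw [hGk, hGi]
  by_cases hdA : A.det = 0
  · -- key case
    have haux : G k * A.adjugate j i = G i * A.adjugate j k := by
      by_cases h1 : (A.submatrix i.succAbove j.succAbove).det = 0
      · by_cases h2 : (A.submatrix k.succAbove j.succAbove).det = 0
        · simp only [Matrix.adjugate_fin_succ_eq_det_submatrix, h1, h2]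
          ring
        · exact (aux_kernel_prop A hdA G hG k j h2 i).symm
      · exact aux_kernel_prop A hdA G hG i j h1 k
    rw [Matrix.adjugate_fin_succ_eq_det_submatrix, Matrix.adjugate_fin_succ_eq_det_submatrix]
      at haux
    have e1 : ((-1 : F) ^ ((i : ℕ) + (j : ℕ))) * ((-1 : F) ^ ((i : ℕ) + (j : ℕ))) = 1 := by
      rw [← pow_add]
      exact Even.neg_one_pow ⟨(i : ℕ) + (j : ℕ), rfl⟩
    have e2 : ((-1 : F) ^ ((i : ℕ) + (j : ℕ))) * ((-1 : F) ^ ((k : ℕ) + (j : ℕ))) =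
        (-1 : F) ^ ((i : ℕ) + (k : ℕ)) := by
      rw [← pow_add, show (i : ℕ) + j + ((k : ℕ) + j) = ((i : ℕ) + k) + 2 * j by ring,
        pow_add, pow_mul]
      norm_num
    calc (A.submatrix i.succAbove j.succAbove).det * G k
        = (((-1 : F) ^ ((i : ℕ) + (j : ℕ))) * ((-1 : F) ^ ((i : ℕ) + (j : ℕ)))) *
            ((A.submatrix i.succAbove j.succAbove).det * G k) := by rw [e1, one_mul]
      _ = ((-1 : F) ^ ((i : ℕ) + (j : ℕ))) *
            (G k * ((-1 : F) ^ ((i : ℕ) + (j : ℕ)) *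
              (A.submatrix i.succAbove j.succAbove).det)) := by ring
      _ = ((-1 : F) ^ ((i : ℕ) + (j : ℕ))) *
            (G i * ((-1 : F) ^ ((k : ℕ) + (j : ℕ)) *
              (A.submatrix k.succAbove j.succAbove).det)) := by rw [haux]
      _ = (((-1 : F) ^ ((i : ℕ) + (j : ℕ))) * ((-1 : F) ^ ((k : ℕ) + (j : ℕ)))) *
            ((A.submatrix k.succAbove j.succAbove).det * G i) := by ring
      _ = (-1 : F) ^ ((i : ℕ) + (k : ℕ)) *
            (A.submatrix k.succAbove j.succAbove).det * G i := by rw [e2]; ring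
  · -- A invertible, so G = 0
    have hu : IsUnit A.det := isUnit_iff_ne_zero.mpr hdA
    haveI := A.invertibleOfIsUnitDet hu
    have hG0 : G = 0 := by
      have h := congrArg (fun v => Matrix.vecMul v (⅟A)) hG
      rw [Matrix.vecMul_vecMul, mul_invOf_self, Matrix.vecMul_one, Matrix.zero_vecMul] at h; exact h
    have hk0 : G k = 0 := by rw [hG0]; rfl
    have hi0 : G i = 0 := by rw [hG0]; rfl
    rw [hk0, hi0]
    ring
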